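/- Let D be the derivation on the Laurent polynomial ring ℚ[a,b,c,d,t,t^{-1}] with D(a) = D(b) = 3t(ad+bc), D(c) = 2a, D(d) = 2b, D(t) = t^2(c+d). Then D(t^{-2}) = -2t^{-1}(c+d), D^2(t^{-2}) = -4t^{-1}(a+b) + 2(c+d)^2, D^3(t^{-2}) = 12(a-b)(c-d), D^4(t^{-2}) = 24(a-b)^2, and D^5(t^{-2}) = 0. -/
import Mathlib


/-- Let D be the derivation on the Laurent polynomial ring ℚ[a,b,c,d,t,t⁻¹] with
D(a) = D(b) = 3t(ad+bc), D(c) = 2a, D(d) = 2b, D(t) = t²(c+d) (here ti = t⁻¹).  Then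
D(t⁻²) = -2t⁻¹(c+d), D²(t⁻²) = -4t⁻¹(a+b) + 2(c+d)², D³(t⁻²) = 12(a-b)(c-d),
D⁴(t⁻²) = 24(a-b)², and D⁵(t⁻²) = 0. -/
theorem grammar_narayana_laurent {A : Type*} [CommRing A] [Algebra ℚ A]
    (D : Derivation ℚ A A) (a b c d t ti : A) (hti : t * ti = 1)
    (ha : D a = 3 * t * (a * d + b * c)) (hb : D b = 3 * t * (a * d + b * c))
    (hc : D c = 2 * a) (hd : D d = 2 * b) (ht : D t = t ^ 2 * (c + d)) :
    D (ti ^ 2) = -2 * ti * (c + d) ∧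
    (⇑D)^[2] (ti ^ 2) = -4 * ti * (a + b) + 2 * (c + d) ^ 2 ∧
    (⇑D)^[3] (ti ^ 2) = 12 * (a - b) * (c - d) ∧
    (⇑D)^[4] (ti ^ 2) = 24 * (a - b) ^ 2 ∧
    (⇑D)^[5] (ti ^ 2) = 0 := by
  have hnum : ∀ n : ℕ, D (n : A) = 0 := fun n => D.map_natCast n
  have h1 : D (t * ti) = 0 := by rw [hti]; simp
  rw [D.leibniz, smul_eq_mul, smul_eq_mul, ht] at h1
  have hDti : D ti = -(c + d) := by
    linear_combination ti * h1 + (-(D ti) - (ti*t + 1) * (c+d)) * hti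
  have e1 : D (ti ^ 2) = -2 * ti * (c + d) := by
    rw [pow_two, D.leibniz, smul_eq_mul, hDti]; ring
  have e2 : D (-2 * ti * (c + d)) = -4 * ti * (a + b) + 2 * (c + d) ^ 2 := by
    have h2 : D (2 : A) = 0 := by simpa using hnum 2
    simp only [D.leibniz, map_add, map_neg, smul_eq_mul, hDti, hc, hd, h2]
    ring
  have e3 : D (-4 * ti * (a + b) + 2 * (c + d) ^ 2) = 12 * (a - b) * (c - d) := by
    have h4 : D (4 : A) = 0 := by simpa using hnum 4
    have h2 : D (2 : A) = 0 := by simpa using hnum 2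
    simp only [D.leibniz, D.leibniz_pow, map_add, map_neg, smul_eq_mul, hDti, ha, hb, hc, hd, h2, h4]
    linear_combination (-24*(a*d+b*c)) * hti
  have e4 : D (12 * (a - b) * (c - d)) = 24 * (a - b) ^ 2 := by
    have h12 : D (12 : A) = 0 := by simpa using hnum 12
    simp only [D.leibniz, map_sub, smul_eq_mul, ha, hb, hc, hd, h12]
    ring
  have e5 : D (24 * (a - b) ^ 2) = 0 := by
    have h24 : D (24 : A) = 0 := by simpa using hnum 24
    simp only [D.leibniz, D.leibniz_pow, map_sub, smul_eq_mul, ha, hb, hc, hd, h24]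
    ring
  refine ⟨e1, ?_, ?_, ?_, ?_⟩ <;>
    simp only [Function.iterate_succ, Function.iterate_zero, Function.comp_apply, id_eq,
      e1, e2, e3, e4, e5, map_zero]
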